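/- Let P : ℝ^f → ℝ be a homogeneous polynomial of degree n. Define the multiplication structure: for i + j = n, the map Sym^i(ℝ^f) × Sym^j(ℝ^f) → ℝ induced by the polarization of P. Let N^i ⊂ Sym^i(ℝ^f) be the null space of this pairing against Sym^j(ℝ^f). Then for any i, j, k with i + j + k ≤ n, the image of N^i ⊗ Sym^j(ℝ^f) under the symmetrized product Sym^i ⊗ Sym^j → Sym^{i+j} lies in N^{i+j}. Consequently the quotients H^i = Sym^i/N^i form a graded commutative ring under the induced products. -/

import Mathlib

open MvPolynomial

/-- The apolar (polarization) pairing of two polynomials: `⟨P, Q⟩ = ∑_d d! ⬝ Q_d ⬝ P_d`.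
For `Q` a product of homogeneous polynomials of complementary degrees this computes the value of
the full polarization of the degree-`n` form `P` on the corresponding symmetric tensors. -/
noncomputable def apolarPairing (f : ℕ) (P Q : MvPolynomial (Fin f) ℝ) : ℝ :=
  ∑ d ∈ Q.support, (∏ i, (Nat.factorial (d i) : ℝ)) * Q.coeff d * P.coeff d

/-- `N^i`: the null space of the pairing `Sym^i × Sym^{n-i} → ℝ` induced by the polarization of
`P`, modelled by homogeneous polynomials of degree `i` paired via the apolar pairing. -/
def nullSpace (f n : ℕ) (P : MvPolynomial (Fin f) ℝ) (i : ℕ) :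
    Set (MvPolynomial (Fin f) ℝ) :=
  {p | p ∈ homogeneousSubmodule (Fin f) ℝ i ∧
    ∀ q ∈ homogeneousSubmodule (Fin f) ℝ (n - i), apolarPairing f P (p * q) = 0}

lemma apolarPairing_eq_sum (f : ℕ) (P Q : MvPolynomial (Fin f) ℝ) :
    apolarPairing f P Q =
      (AddMonoidAlgebra.coeff Q).sum (fun d c => (∏ i, (Nat.factorial (d i) : ℝ)) * c * P.coeff d) := rfl

lemma apolarPairing_add (f : ℕ) (P Q R : MvPolynomial (Fin f) ℝ) :
    apolarPairing f P (Q + R) = apolarPairing f P Q + apolarPairing f P R := by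
  simp only [apolarPairing_eq_sum]
  exact Finsupp.sum_add_index' (by intro d; simp) (by intro d c c'; ring)

lemma nullSpace_mul_aux (f n : ℕ) (P : MvPolynomial (Fin f) ℝ) (i j : ℕ) (hij : i + j ≤ n) :
    ∀ p ∈ nullSpace f n P i, ∀ q ∈ homogeneousSubmodule (Fin f) ℝ j,
      p * q ∈ nullSpace f n P (i + j) := by
  rintro p ⟨hp, hpn⟩ q hq
  refine ⟨?_, ?_⟩
  · rw [mem_homogeneousSubmodule] at *
    exact hp.mul hq
  · intro r hr
    rw [mem_homogeneousSubmodule] at hq hr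
    have hqr : q * r ∈ homogeneousSubmodule (Fin f) ℝ (n - i) := by
      rw [mem_homogeneousSubmodule]
      have : j + (n - (i + j)) = n - i := by omega
      simpa [this] using hq.mul hr
    have := hpn (q * r) hqr
    rw [mul_assoc]
    exact this

/-- For a homogeneous polynomial `P` of degree `n`, the product of an element of `N^i` with any
element of `Sym^j` lies in `N^{i+j}` (for `i + j ≤ n`); consequently the product descends to the
quotients `H^i = Sym^i / N^i`, making them a graded commutative ring. -/
theorem nullSpace_mul (f n : ℕ) (P : MvPolynomial (Fin f) ℝ)
    (hP : P ∈ homogeneousSubmodule (Fin f) ℝ n)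
    (i j : ℕ) (hij : i + j ≤ n) :
    (∀ p ∈ nullSpace f n P i, ∀ q ∈ homogeneousSubmodule (Fin f) ℝ j,
        p * q ∈ nullSpace f n P (i + j)) ∧
    (∀ p p' q q' : MvPolynomial (Fin f) ℝ,
        p ∈ homogeneousSubmodule (Fin f) ℝ i → p' ∈ homogeneousSubmodule (Fin f) ℝ i →
        q ∈ homogeneousSubmodule (Fin f) ℝ j → q' ∈ homogeneousSubmodule (Fin f) ℝ j →
        p - p' ∈ nullSpace f n P i → q - q' ∈ nullSpace f n P j →
        p * q - p' * q' ∈ nullSpace f n P (i + j)) := by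
  have key := nullSpace_mul_aux f n P i j hij
  refine ⟨key, ?_⟩
  intro p p' q q' hp hp' hq hq' hpp hqq
  have hdecomp : p * q - p' * q' = (p - p') * q + (q - q') * p' := by ring
  rw [hdecomp]
  have h1 : (p - p') * q ∈ nullSpace f n P (i + j) := key _ hpp _ hq
  have h2 : (q - q') * p' ∈ nullSpace f n P (i + j) := by
    have := nullSpace_mul_aux f n P j i (by omega) _ hqq _ hp'
    rcases this with ⟨hmem, hnull⟩
    constructor
    · rw [mem_homogeneousSubmodule] at hmem ⊢
      have : j + i = i + j := by ring
      simpa [this] using hmem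
    · intro r hr
      have : n - (j + i) = n - (i + j) := by omega
      exact hnull r (by simpa [this] using hr)
  exact ⟨Submodule.add_mem _ h1.1 h2.1, fun r hr => by
    rw [add_mul, apolarPairing_add, h1.2 r hr, h2.2 r hr, add_zero]⟩
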